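/- Let 𝒞 be a family of k-element sets, let 𝒜 ⊆ 𝒞 be a 2-locally optimal packing and ℬ ⊆ 𝒞 any packing. Then |ℬ| ≤ ((k+1)/2)·|𝒜|. -/

import Mathlib

/-- Let `𝒞` be a family of `k`-element sets, `𝒜 ⊆ 𝒞` a 2-locally
optimal packing and `ℬ ⊆ 𝒞` any packing.  Then `|ℬ| ≤ ((k+1)/2)·|𝒜|`.
A packing is a pairwise disjoint subfamily; 2-local optimality says that for every
packing `𝒟` with `|𝒟| ≤ 2`, removing from `𝒜` the sets meeting `𝒟` and adding `𝒟`
does not increase the cardinality. -/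
theorem stmt_3 {α : Type*} [DecidableEq α] (k : ℕ) (hk : 1 ≤ k)
    (𝒞 A B : Finset (Finset α))
    (hcard : ∀ S ∈ 𝒞, S.card = k)
    (hA : A ⊆ 𝒞) (hApack : ∀ x ∈ A, ∀ y ∈ A, x ≠ y → Disjoint x y)
    (hB : B ⊆ 𝒞) (hBpack : ∀ x ∈ B, ∀ y ∈ B, x ≠ y → Disjoint x y)
    (hlocal : ∀ D ⊆ 𝒞, (∀ x ∈ D, ∀ y ∈ D, x ≠ y → Disjoint x y) → D.card ≤ 2 →
      ((A.filter (fun a => ∀ d ∈ D, Disjoint a d)) ∪ D).card ≤ A.card) :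
    (B.card : ℝ) ≤ (k + 1) / 2 * A.card := by
  classical
  set N : Finset α → Finset (Finset α) :=
    fun b => A.filter (fun a => ¬ Disjoint a b) with hN
  have hBne : ∀ b ∈ B, b.Nonempty := by
    intro b hb
    rw [← Finset.card_pos, hcard b (hB hb)]; omega
  -- each b ∈ B meets at least one set of A
  have hdeg1 : ∀ b ∈ B, 1 ≤ (N b).card := by
    intro b hb
    by_contra h
    have hNb : N b = ∅ := by
      have : (N b).card = 0 := by omega
      exact Finset.card_eq_zero.mp this
    have hdisj : ∀ a ∈ A, Disjoint a b := by
      intro a ha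
      by_contra hd
      have : a ∈ N b := Finset.mem_filter.mpr ⟨ha, hd⟩
      simp [hNb] at this
    have hbA : b ∉ A := by
      intro hbA
      exact (hBne b hb).ne_empty (by simpa using disjoint_self.mp (hdisj b hbA))
    have := hlocal {b} (by simpa using hB hb) (by simp) (by simp)
    have hfilt : A.filter (fun a => ∀ d ∈ ({b} : Finset (Finset α)), Disjoint a d) = A := by
      apply Finset.filter_true_of_mem
      intro a ha d hd
      simp only [Finset.mem_singleton] at hd
      rw [hd]; exact hdisj a ha
    rw [hfilt] at this
    have : (insert b A).card ≤ A.card := by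
      rwa [Finset.union_comm, ← Finset.insert_eq] at this
    rw [Finset.card_insert_of_notMem hbA] at this
    omega
  -- double counting: sum of degrees ≤ k * |A|
  have hsum : ∑ b ∈ B, (N b).card ≤ k * A.card := by
    have hswap : ∑ b ∈ B, (N b).card
        = ∑ a ∈ A, (B.filter (fun b => ¬ Disjoint a b)).card := by
      simp only [hN, Finset.card_filter]
      rw [Finset.sum_comm]
    rw [hswap]
    have hbound : ∀ a ∈ A, (B.filter (fun b => ¬ Disjoint a b)).card ≤ k := by
      intro a ha
      set T := B.filter (fun b => ¬ Disjoint a b) with hT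
      have hmemT : ∀ b ∈ T, (a ∩ b).Nonempty := by
        intro b hbT
        have := (Finset.mem_filter.mp hbT).2
        rwa [Finset.not_disjoint_iff_nonempty_inter] at this
      have hpw : ∀ x ∈ T, ∀ y ∈ T, x ≠ y → Disjoint (a ∩ x) (a ∩ y) := by
        intro x hx y hy hxy
        exact Finset.disjoint_of_subset_left Finset.inter_subset_right
          (Finset.disjoint_of_subset_right Finset.inter_subset_right
            (hBpack x (Finset.mem_filter.mp hx).1 y (Finset.mem_filter.mp hy).1 hxy))
      have hcardsum : ∑ b ∈ T, (a ∩ b).card ≤ a.card := by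
        rw [← Finset.card_biUnion hpw]
        exact Finset.card_le_card (by
          intro x hx
          obtain ⟨b, _, hxb⟩ := Finset.mem_biUnion.mp hx
          exact Finset.mem_of_mem_inter_left hxb)
      calc T.card = ∑ _b ∈ T, 1 := by simp
        _ ≤ ∑ b ∈ T, (a ∩ b).card := by
            apply Finset.sum_le_sum
            intro b hb
            exact Finset.card_pos.mpr (hmemT b hb)
        _ ≤ a.card := hcardsum
        _ = k := hcard a (hA ha)
    calc ∑ a ∈ A, (B.filter (fun b => ¬ Disjoint a b)).card
        ≤ ∑ _a ∈ A, k := Finset.sum_le_sum hbound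
      _ = k * A.card := by rw [Finset.sum_const, smul_eq_mul, mul_comm]
  -- the sets of B meeting exactly one set of A
  set B1 := B.filter (fun b => (N b).card = 1) with hB1
  have hB1le : B1.card ≤ A.card := by
    set f : Finset α → Finset α :=
      fun b => if h : (N b).Nonempty then h.choose else ∅ with hf
    have hfmem : ∀ b ∈ B1, f b ∈ N b ∧ N b = {f b} := by
      intro b hb
      have h1 : (N b).card = 1 := (Finset.mem_filter.mp hb).2
      have hne : (N b).Nonempty := Finset.card_pos.mp (by omega)
      have hm : f b ∈ N b := by simp only [hf, dif_pos hne]; exact hne.choose_spec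
      refine ⟨hm, ?_⟩
      obtain ⟨x, hx⟩ := Finset.card_eq_one.mp h1
      rw [hx] at hm ⊢
      simp_all
    apply Finset.card_le_card_of_injOn f
    · intro b hb
      exact Finset.mem_filter.mp ((hfmem b hb).1) |>.1
    · intro b hbm b' hb'm hfe
      by_contra hne
      have hb : b ∈ B1 := hbm
      have hb' : b' ∈ B1 := hb'm
      have hbB : b ∈ B := (Finset.mem_filter.mp hb).1
      have hb'B : b' ∈ B := (Finset.mem_filter.mp hb').1
      have hNb : N b = {f b} := (hfmem b hb).2
      have hNb' : N b' = {f b} := by rw [hfe]; exact (hfmem b' hb').2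
      set a := f b with ha
      have haA : a ∈ A := (Finset.mem_filter.mp (hfmem b hb).1).1
      -- apply 2-local optimality with D = {b, b'}
      have hDsub : ({b, b'} : Finset (Finset α)) ⊆ 𝒞 := by
        intro x hx
        simp only [Finset.mem_insert, Finset.mem_singleton] at hx
        rcases hx with rfl | rfl
        · exact hB hbB
        · exact hB hb'B
      have hDpack : ∀ x ∈ ({b, b'} : Finset (Finset α)), ∀ y ∈ ({b, b'} : Finset (Finset α)),
          x ≠ y → Disjoint x y := by
        intro x hx y hy hxy
        simp only [Finset.mem_insert, Finset.mem_singleton] at hx hy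
        rcases hx with rfl | rfl <;> rcases hy with rfl | rfl
        · exact absurd rfl hxy
        · exact hBpack x hbB y hb'B hxy
        · exact hBpack x hb'B y hbB hxy
        · exact absurd rfl hxy
      have hDcard : ({b, b'} : Finset (Finset α)).card ≤ 2 := Finset.card_insert_le _ _ |>.trans (by simp)
      have hloc := hlocal {b, b'} hDsub hDpack hDcard
      set F := A.filter (fun x => ∀ d ∈ ({b, b'} : Finset (Finset α)), Disjoint x d) with hF
      have hdisjmem : ∀ x ∈ A, x ≠ a → x ∈ F := by
        intro x hx hxa
        refine Finset.mem_filter.mpr ⟨hx, ?_⟩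
        intro d hd
        simp only [Finset.mem_insert, Finset.mem_singleton] at hd
        rcases hd with rfl | rfl
        · by_contra hc
          have hm : x ∈ N d := Finset.mem_filter.mpr ⟨hx, hc⟩
          rw [hNb, Finset.mem_singleton] at hm
          exact hxa hm
        · by_contra hc
          have hm : x ∈ N d := Finset.mem_filter.mpr ⟨hx, hc⟩
          rw [hNb', Finset.mem_singleton] at hm
          exact hxa hm
      have hFsub : A.erase a ⊆ F := by
        intro x hx
        exact hdisjmem x (Finset.mem_of_mem_erase hx) (Finset.ne_of_mem_erase hx)
      have hFcard : A.card - 1 ≤ F.card := by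
        have := Finset.card_le_card hFsub
        rwa [Finset.card_erase_of_mem haA] at this
      have hbF : b ∉ F := by
        intro hc
        exact (hBne b hbB).ne_empty
          (by simpa using disjoint_self.mp ((Finset.mem_filter.mp hc).2 b (by simp)))
      have hb'F : b' ∉ F := by
        intro hc
        exact (hBne b' hb'B).ne_empty
          (by simpa using disjoint_self.mp ((Finset.mem_filter.mp hc).2 b' (by simp)))
      have hFD : Disjoint F ({b, b'} : Finset (Finset α)) := by
        rw [Finset.disjoint_right]
        intro x hx
        simp only [Finset.mem_insert, Finset.mem_singleton] at hx
        rcases hx with rfl | rfl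
        · exact hbF
        · exact hb'F
      rw [Finset.card_union_of_disjoint hFD] at hloc
      have hDc : ({b, b'} : Finset (Finset α)).card = 2 := by
        rw [Finset.card_insert_of_notMem (by simpa using hne), Finset.card_singleton]
      have hA1 : 1 ≤ A.card := Finset.card_pos.mpr ⟨a, haA⟩
      omega
  -- final count
  set B2 := B.filter (fun b => ¬ (N b).card = 1) with hB2
  have hsplit : B1.card + B2.card = B.card :=
    Finset.card_filter_add_card_filter_not _
  have hsum2 : B1.card + 2 * B2.card ≤ k * A.card := by
    have h1 : ∑ b ∈ B1, (N b).card = B1.card := by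
      rw [Finset.sum_congr rfl (fun b hb => (Finset.mem_filter.mp hb).2)]
      rw [Finset.sum_const, smul_eq_mul, mul_one]
    have h2 : 2 * B2.card ≤ ∑ b ∈ B2, (N b).card := by
      calc 2 * B2.card = ∑ _b ∈ B2, 2 := by rw [Finset.sum_const, smul_eq_mul, mul_comm]
        _ ≤ ∑ b ∈ B2, (N b).card := by
            apply Finset.sum_le_sum
            intro b hb
            have hbB : b ∈ B := (Finset.mem_filter.mp hb).1
            have := hdeg1 b hbB
            have hne1 := (Finset.mem_filter.mp hb).2
            omega
    have hsplitsum : ∑ b ∈ B1, (N b).card + ∑ b ∈ B2, (N b).card = ∑ b ∈ B, (N b).card :=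
      Finset.sum_filter_add_sum_filter_not _ _ _
    omega
  have hfinal : 2 * B.card ≤ (k + 1) * A.card := by nlinarith
  have hR : (2 * B.card : ℝ) ≤ (k + 1) * A.card := by exact_mod_cast hfinal
  linarith
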